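/- Fix τ ∈ [0,1] and λ > 0, and let ĉ ∈ ℝ and Q̂ : [θmin, θmax] → ℝ be twice continuously differentiable with Q̂ > 0, ∫_Θ Q̂(θ) dθ = 1, α Q̂''(θ) + (−λ ĉ + g_τ(θ) λ² + r) Q̂(θ) = 0 on Θ, and Q̂'(θmin) = Q̂'(θmax) = 0. Then for every ε > 0 there exists a₀(ε) > 0 such that, for every a ≥ a₀(ε), any solution (c, μ) of the slab problem P_{τ,a} satisfying ν(0) = ε has c ≤ ĉ. -/

import Mathlib

open Set Filter MeasureTheory

section Helpers

lemma hasDerivAt_slice_x (F : ℝ × ℝ → ℝ) (hF : Differentiable ℝ F) (ξ θ : ℝ) :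
    HasDerivAt (fun x => F (x, θ)) (fderiv ℝ F (ξ, θ) (1, 0)) ξ := by
  have h2 : HasDerivAt (fun x : ℝ => (x, θ)) ((1:ℝ), (0:ℝ)) ξ :=
    (hasDerivAt_id ξ).prodMk (hasDerivAt_const ξ θ)
  simpa [Function.comp_def] using (hF (ξ, θ)).hasFDerivAt.comp_hasDerivAt ξ h2

lemma hasDerivAt_slice_t (F : ℝ × ℝ → ℝ) (hF : Differentiable ℝ F) (ξ θ : ℝ) :
    HasDerivAt (fun t => F (ξ, t)) (fderiv ℝ F (ξ, θ) (0, 1)) θ := by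
  have h2 : HasDerivAt (fun t : ℝ => (ξ, t)) ((0:ℝ), (1:ℝ)) θ :=
    (hasDerivAt_const θ ξ).prodMk (hasDerivAt_id θ)
  simpa [Function.comp_def] using (hF (ξ, θ)).hasFDerivAt.comp_hasDerivAt θ h2

lemma contdiff_partial_x (F : ℝ × ℝ → ℝ) (hF : ContDiff ℝ 2 F) :
    ContDiff ℝ 1 (fun p => fderiv ℝ F p (1, 0)) :=
  (hF.fderiv_right (by norm_num)).clm_apply contDiff_const

lemma contdiff_partial_t (F : ℝ × ℝ → ℝ) (hF : ContDiff ℝ 2 F) :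
    ContDiff ℝ 1 (fun p => fderiv ℝ F p (0, 1)) :=
  (hF.fderiv_right (by norm_num)).clm_apply contDiff_const

lemma slice_xx (F : ℝ × ℝ → ℝ) (hF : ContDiff ℝ 2 F) (ξ θ : ℝ) :
    iteratedDeriv 2 (fun x => F (x, θ)) ξ
      = fderiv ℝ (fun p => fderiv ℝ F p (1, 0)) (ξ, θ) (1, 0) := by
  have hF1 : ContDiff ℝ 1 (fun p => fderiv ℝ F p (1, 0)) := contdiff_partial_x F hF
  have hFd : Differentiable ℝ F := hF.differentiable (by norm_num)
  have hd : deriv (fun x => F (x, θ)) = fun x => fderiv ℝ F (x, θ) (1, 0) :=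
    funext fun x => (hasDerivAt_slice_x F hFd x θ).deriv
  have h2 : iteratedDeriv 2 (fun x => F (x, θ)) = deriv (deriv (fun x => F (x, θ))) := by
    rw [show (2:ℕ) = 1 + 1 from rfl, iteratedDeriv_succ, iteratedDeriv_one]
  rw [h2, hd]
  exact (hasDerivAt_slice_x _ (hF1.differentiable one_ne_zero) ξ θ).deriv

lemma slice_tt (F : ℝ × ℝ → ℝ) (hF : ContDiff ℝ 2 F) (ξ θ : ℝ) :
    iteratedDeriv 2 (fun t => F (ξ, t)) θ
      = fderiv ℝ (fun p => fderiv ℝ F p (0, 1)) (ξ, θ) (0, 1) := by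
  have hF1 : ContDiff ℝ 1 (fun p => fderiv ℝ F p (0, 1)) := contdiff_partial_t F hF
  have hFd : Differentiable ℝ F := hF.differentiable (by norm_num)
  have hd : deriv (fun t => F (ξ, t)) = fun t => fderiv ℝ F (ξ, t) (0, 1) :=
    funext fun t => (hasDerivAt_slice_t F hFd ξ t).deriv
  have h2 : iteratedDeriv 2 (fun t => F (ξ, t)) = deriv (deriv (fun t => F (ξ, t))) := by
    rw [show (2:ℕ) = 1 + 1 from rfl, iteratedDeriv_succ, iteratedDeriv_one]
  rw [h2, hd]
  exact (hasDerivAt_slice_t _ (hF1.differentiable one_ne_zero) ξ θ).deriv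

lemma cont_partial_xx (F : ℝ × ℝ → ℝ) (hF : ContDiff ℝ 2 F) :
    Continuous (fun p => fderiv ℝ (fun q => fderiv ℝ F q (1, 0)) p (1, 0)) :=
  (((contdiff_partial_x F hF).fderiv_right (m := 0) (by norm_num)).clm_apply contDiff_const).continuous

lemma cont_partial_tt (F : ℝ × ℝ → ℝ) (hF : ContDiff ℝ 2 F) :
    Continuous (fun p => fderiv ℝ (fun q => fderiv ℝ F q (0, 1)) p (0, 1)) :=
  (((contdiff_partial_t F hF).fderiv_right (m := 0) (by norm_num)).clm_apply contDiff_const).continuous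

lemma deriv2_nonneg_right (h : ℝ → ℝ) (hh : ContDiff ℝ 2 h) (x b : ℝ) (hxb : x < b)
    (hd : deriv h x = 0) (hmin : ∀ y ∈ Set.Ico x b, h x ≤ h y) :
    0 ≤ iteratedDeriv 2 h x := by
  by_contra hneg
  push_neg at hneg
  have h2 : iteratedDeriv 2 h = deriv (deriv h) := by
    rw [show (2:ℕ) = 1 + 1 from rfl, iteratedDeriv_succ, iteratedDeriv_one]
  rw [h2] at hneg
  have hh' : ContDiff ℝ 1 (deriv h) := by
    have := (contDiff_succ_iff_deriv (n := 1)).mp (by exact_mod_cast hh)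
    exact this.2.2
  have hcont : Continuous (deriv (deriv h)) := hh'.continuous_deriv le_rfl
  have hev : ∀ᶠ y in nhds x, deriv (deriv h) y < 0 :=
    (hcont.continuousAt).eventually_lt continuousAt_const hneg
  rcases Metric.eventually_nhds_iff.mp hev with ⟨δ₀, hδ₀, hball⟩
  set δ := min (δ₀ / 2) ((b - x) / 2) with hδdef
  have hδpos : 0 < δ := lt_min (by linarith) (by linarith)
  have hsub : ∀ y ∈ Icc x (x + δ), deriv (deriv h) y < 0 := by
    intro y hy
    apply hball
    rw [Real.dist_eq, abs_lt]
    have : δ < δ₀ := lt_of_le_of_lt (min_le_left _ _) (by linarith)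
    exact ⟨by linarith [hy.1], by linarith [hy.2]⟩
  have hanti : StrictAntiOn (deriv h) (Icc x (x + δ)) := by
    apply strictAntiOn_of_deriv_neg (convex_Icc _ _) (hh'.continuous.continuousOn)
    intro y hy
    rw [interior_Icc] at hy
    exact hsub y ⟨hy.1.le, hy.2.le⟩
  have hderivneg : ∀ y ∈ Ioo x (x + δ), deriv h y < 0 := by
    intro y hy
    have := hanti ⟨le_refl x, by linarith⟩ ⟨hy.1.le, hy.2.le⟩ hy.1
    rwa [hd] at this
  have hanti2 : StrictAntiOn h (Icc x (x + δ)) := by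
    apply strictAntiOn_of_deriv_neg (convex_Icc _ _) ((hh.continuous).continuousOn)
    intro y hy
    rw [interior_Icc] at hy
    exact hderivneg y hy
  have hlt : h (x + δ) < h x :=
    hanti2 ⟨le_refl x, by linarith⟩ ⟨by linarith, le_refl _⟩ (by linarith)
  have hge : h x ≤ h (x + δ) := by
    apply hmin
    have : δ ≤ (b - x) / 2 := min_le_right _ _
    exact ⟨by linarith, by linarith⟩
  linarith

lemma deriv2_nonneg_left (h : ℝ → ℝ) (hh : ContDiff ℝ 2 h) (x b : ℝ) (hxb : b < x)
    (hd : deriv h x = 0) (hmin : ∀ y ∈ Set.Ioc b x, h x ≤ h y) :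
    0 ≤ iteratedDeriv 2 h x := by
  by_contra hneg
  push_neg at hneg
  have h2 : iteratedDeriv 2 h = deriv (deriv h) := by
    rw [show (2:ℕ) = 1 + 1 from rfl, iteratedDeriv_succ, iteratedDeriv_one]
  rw [h2] at hneg
  have hh' : ContDiff ℝ 1 (deriv h) := by
    have := (contDiff_succ_iff_deriv (n := 1)).mp (by exact_mod_cast hh)
    exact this.2.2
  have hcont : Continuous (deriv (deriv h)) := hh'.continuous_deriv le_rfl
  have hev : ∀ᶠ y in nhds x, deriv (deriv h) y < 0 :=
    (hcont.continuousAt).eventually_lt continuousAt_const hneg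
  rcases Metric.eventually_nhds_iff.mp hev with ⟨δ₀, hδ₀, hball⟩
  set δ := min (δ₀ / 2) ((x - b) / 2) with hδdef
  have hδpos : 0 < δ := lt_min (by linarith) (by linarith)
  have hsub : ∀ y ∈ Icc (x - δ) x, deriv (deriv h) y < 0 := by
    intro y hy
    apply hball
    rw [Real.dist_eq, abs_lt]
    have : δ < δ₀ := lt_of_le_of_lt (min_le_left _ _) (by linarith)
    exact ⟨by linarith [hy.1], by linarith [hy.2]⟩
  have hanti : StrictAntiOn (deriv h) (Icc (x - δ) x) := by
    apply strictAntiOn_of_deriv_neg (convex_Icc _ _) (hh'.continuous.continuousOn)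
    intro y hy
    rw [interior_Icc] at hy
    exact hsub y ⟨hy.1.le, hy.2.le⟩
  have hderivpos : ∀ y ∈ Ioo (x - δ) x, 0 < deriv h y := by
    intro y hy
    have := hanti ⟨hy.1.le, hy.2.le⟩ ⟨by linarith, le_refl x⟩ hy.2
    rwa [hd] at this
  have hmono : StrictMonoOn h (Icc (x - δ) x) := by
    apply strictMonoOn_of_deriv_pos (convex_Icc _ _) ((hh.continuous).continuousOn)
    intro y hy
    rw [interior_Icc] at hy
    exact hderivpos y hy
  have hlt : h (x - δ) < h x :=
    hmono ⟨le_refl _, by linarith⟩ ⟨by linarith, le_refl x⟩ (by linarith)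
  have hge : h x ≤ h (x - δ) := by
    apply hmin
    have : δ ≤ (x - b) / 2 := min_le_right _ _
    exact ⟨by linarith, by linarith⟩
  linarith

end Helpers

/-- A solution of the slab problem `P_{τ,a}`: a nonnegative twice continuously
differentiable function solving the equation with diffusivity `g_τ(θ) = thmin + τ(θ - thmin)`
on `(-a, a) × (thmin, thmax)`, with Neumann conditions in `θ` and the prescribed
boundary values at `ξ = ±a`. -/
def IsSlabSolution (thmin thmax alpha r τ a c : ℝ) (μ : ℝ → ℝ → ℝ) : Prop :=
  (∀ ξ ∈ Set.Icc (-a) a, ∀ θ ∈ Set.Icc thmin thmax, 0 ≤ μ ξ θ) ∧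
  ContDiff ℝ 2 (Function.uncurry μ) ∧
  (∀ ξ ∈ Set.Ioo (-a) a, ∀ θ ∈ Set.Ioo thmin thmax,
    -(c * deriv (fun x => μ x θ) ξ)
      - (thmin + τ * (θ - thmin)) * iteratedDeriv 2 (fun x => μ x θ) ξ
      - alpha * iteratedDeriv 2 (fun t => μ ξ t) θ
      = r * μ ξ θ * (1 - ∫ t in Set.Ioo thmin thmax, μ ξ t)) ∧
  (∀ ξ ∈ Set.Ioo (-a) a,
    deriv (fun t => μ ξ t) thmin = 0 ∧ deriv (fun t => μ ξ t) thmax = 0) ∧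
  (∀ θ ∈ Set.Icc thmin thmax, μ (-a) θ = 1 / (thmax - thmin) ∧ μ a θ = 0)

theorem statement8 (thmin thmax alpha r : ℝ)
    (hth : 0 < thmin) (hthth : thmin < thmax) (halpha : 0 < alpha) (hr : 0 < r)
    (τ : ℝ) (hτ : τ ∈ Set.Icc (0 : ℝ) 1) (lam : ℝ) (hlam : 0 < lam)
    (chat : ℝ) (Qhat : ℝ → ℝ)
    (hQsm : ContDiff ℝ 2 Qhat)
    (hQpos : ∀ θ ∈ Set.Icc thmin thmax, 0 < Qhat θ)
    (hQint : (∫ θ in Set.Ioo thmin thmax, Qhat θ) = 1)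
    (hQeq : ∀ θ ∈ Set.Ioo thmin thmax,
      alpha * iteratedDeriv 2 Qhat θ
        + (-(lam * chat) + (thmin + τ * (θ - thmin)) * lam ^ 2 + r) * Qhat θ = 0)
    (hQbc : deriv Qhat thmin = 0 ∧ deriv Qhat thmax = 0) :
    ∀ ε > (0 : ℝ), ∃ a₀ > (0 : ℝ), ∀ a ≥ a₀, ∀ (c : ℝ) (μ : ℝ → ℝ → ℝ),
      IsSlabSolution thmin thmax alpha r τ a c μ →
      (∫ t in Set.Ioo thmin thmax, μ 0 t) = ε → c ≤ chat := by
  intro ε hε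
  -- minimum of Qhat on [thmin, thmax]
  obtain ⟨θm, hθmmem, hθmmin'⟩ := isCompact_Icc.exists_isMinOn
    (nonempty_Icc.mpr hthth.le) (hQsm.continuous.continuousOn (s := Icc thmin thmax))
  have hθmmin : ∀ t ∈ Icc thmin thmax, Qhat θm ≤ Qhat t := fun t ht => hθmmin' ht
  set m := Qhat θm with hmdef
  have hmpos : 0 < m := hQpos θm hθmmem
  set X := ε * ((thmax - thmin) * m) with hXdef
  have hXpos : 0 < X := by
    apply mul_pos hε
    apply mul_pos (by linarith) hmpos
  refine ⟨max 1 ((Real.log X⁻¹ + 1) / lam), lt_of_lt_of_le one_pos (le_max_left _ _), ?_⟩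
  intro a ha c μ hsol hνε
  by_contra hcc
  push_neg at hcc
  obtain ⟨hpos, hsm, hpde, hneu, hbc⟩ := hsol
  have ha1 : 1 ≤ a := le_trans (le_max_left _ _) ha
  have hapos : 0 < a := by linarith
  -- exp(-lam * a) < X
  have hexpX : Real.exp (-(lam * a)) < X := by
    have h1 : (Real.log X⁻¹ + 1) / lam ≤ a := le_trans (le_max_right _ _) ha
    have h2 : Real.log X⁻¹ + 1 ≤ lam * a := by
      rw [div_le_iff₀ hlam] at h1
      linarith [h1]
    have h3 : -(lam * a) < Real.log X := by
      rw [Real.log_inv] at h2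
      linarith
    calc Real.exp (-(lam * a)) < Real.exp (Real.log X) := Real.exp_lt_exp.mpr h3
    _ = X := Real.exp_log hXpos
  set M0 := Real.exp (-(lam * a)) / ((thmax - thmin) * m) with hM0def
  have hM0pos : 0 < M0 := by
    apply div_pos (Real.exp_pos _)
    exact mul_pos (by linarith) hmpos
  have hM0ε : M0 < ε := by
    rw [hM0def, div_lt_iff₀ (mul_pos (by linarith : (0:ℝ) < thmax - thmin) hmpos)]
    calc Real.exp (-(lam * a)) < X := hexpX
    _ = ε * ((thmax - thmin) * m) := hXdef
  -- the compact rectangle and the maximum of μ / ψ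
  set f := Function.uncurry μ with hfdef
  have hfd : Differentiable ℝ f := hsm.differentiable (by norm_num)
  set ψ : ℝ × ℝ → ℝ := fun p => Real.exp (-(lam * p.1)) * Qhat p.2 with hψdef
  have hψcont : Continuous ψ := by
    apply Continuous.mul
    · exact Real.continuous_exp.comp ((continuous_const.mul continuous_fst).neg)
    · exact hQsm.continuous.comp continuous_snd
  set R : Set (ℝ × ℝ) := Icc (-a) a ×ˢ Icc thmin thmax with hRdef
  have hψpos : ∀ p ∈ R, 0 < ψ p := fun p hp =>
    mul_pos (Real.exp_pos _) (hQpos p.2 hp.2)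
  have hRc : IsCompact R := isCompact_Icc.prod isCompact_Icc
  have hRne : R.Nonempty :=
    ⟨(-a, thmin), Set.mem_prod.mpr ⟨Set.mem_Icc.mpr ⟨le_refl _, show -a ≤ a by linarith⟩,
      Set.mem_Icc.mpr ⟨le_refl _, hthth.le⟩⟩⟩
  obtain ⟨P, hPR, hPmax'⟩ := hRc.exists_isMaxOn hRne
    ((hsm.continuous.continuousOn).div (hψcont.continuousOn)
      (fun p hp => ne_of_gt (hψpos p hp)))
  have hPmax : ∀ q ∈ R, f q / ψ q ≤ f P / ψ P := fun q hq => hPmax' hq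
  set M := f P / ψ P with hMdef
  have key : ∀ q ∈ R, μ q.1 q.2 ≤ M * ψ q := by
    intro q hq
    have := hPmax q hq
    rw [div_le_iff₀ (hψpos q hq)] at this
    calc μ q.1 q.2 = f q := by simp [hfdef, Function.uncurry]
    _ ≤ M * ψ q := by linarith [this]
  by_cases hM : M ≤ M0
  · -- Case A : mass at ξ = 0 is small
    have h0a : (0:ℝ) ∈ Icc (-a) a := ⟨by linarith, by linarith⟩
    have hcont0 : Continuous (fun t => μ 0 t) := by
      have : Continuous (fun t : ℝ => f ((0:ℝ), t)) :=
        hsm.continuous.comp (continuous_const.prodMk continuous_id)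
      simpa [hfdef, Function.uncurry] using this
    have hint1 : IntegrableOn (fun t => μ 0 t) (Ioo thmin thmax) :=
      (hcont0.integrableOn_Icc).mono_set Ioo_subset_Icc_self
    have hint2 : IntegrableOn (fun t => M0 * Qhat t) (Ioo thmin thmax) :=
      ((continuous_const.mul hQsm.continuous).integrableOn_Icc).mono_set Ioo_subset_Icc_self
    have hmono : (∫ t in Ioo thmin thmax, μ 0 t) ≤ ∫ t in Ioo thmin thmax, M0 * Qhat t := by
      apply setIntegral_mono_on hint1 hint2 measurableSet_Ioo
      intro t ht
      have htIcc : t ∈ Icc thmin thmax := Ioo_subset_Icc_self ht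
      have h1 : μ 0 t ≤ M * ψ (0, t) := key ((0:ℝ), t) ⟨h0a, htIcc⟩
      have h2 : ψ ((0:ℝ), t) = Qhat t := by simp [hψdef]
      rw [h2] at h1
      calc μ 0 t ≤ M * Qhat t := h1
      _ ≤ M0 * Qhat t := mul_le_mul_of_nonneg_right hM (hQpos t htIcc).le
    rw [integral_const_mul, hQint, mul_one, hνε] at hmono
    linarith
  · -- Case B : the maximum point is interior in ξ; get a contradiction with chat < c
    push_neg at hM
    have hMpos : 0 < M := lt_trans hM0pos hM
    have hPIcc1 : P.1 ∈ Icc (-a) a := hPR.1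
    have hPIcc2 : P.2 ∈ Icc thmin thmax := hPR.2
    have hQP : 0 < Qhat P.2 := hQpos P.2 hPIcc2
    have hψP : 0 < ψ P := hψpos P hPR
    have hμP : μ P.1 P.2 = M * ψ P := by
      rw [hMdef, div_mul_cancel₀ _ (ne_of_gt hψP)]
      simp [hfdef, Function.uncurry]
    -- P.1 ≠ -a
    have hne1 : P.1 ≠ -a := by
      intro hPa
      have h2 : (0:ℝ) < thmax - thmin := by linarith
      have hQm : m ≤ Qhat P.2 := hθmmin P.2 hPIcc2
      have hψval : ψ P = Real.exp (lam * a) * Qhat P.2 := by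
        have e : -(lam * P.1) = lam * a := by rw [hPa]; ring
        show Real.exp (-(lam * P.1)) * Qhat P.2 = _
        rw [e]
      have hfval : f P = 1 / (thmax - thmin) := by
        have hb : μ P.1 P.2 = 1 / (thmax - thmin) := by rw [hPa]; exact (hbc P.2 hPIcc2).1
        simpa [hfdef, Function.uncurry] using hb
      have hle : M ≤ M0 := by
        rw [hMdef, hfval, hψval, hM0def, Real.exp_neg,
          div_le_div_iff₀ (mul_pos (Real.exp_pos _) hQP) (mul_pos h2 hmpos)]
        have e2 : 1 / (thmax - thmin) * ((thmax - thmin) * m) = m := by field_simp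
        have e3 : (Real.exp (lam * a))⁻¹ * (Real.exp (lam * a) * Qhat P.2) = Qhat P.2 := by
          field_simp
        rw [e2, e3]
        exact hQm
      linarith
    have hne2 : P.1 ≠ a := by
      intro hPa
      have hb := (hbc P.2 hPIcc2).2
      have : μ P.1 P.2 = 0 := by rw [hPa]; exact hb
      rw [hμP] at this
      have := mul_pos hMpos hψP
      linarith
    have hξ : P.1 ∈ Ioo (-a) a :=
      ⟨lt_of_le_of_ne hPIcc1.1 (Ne.symm hne1), lt_of_le_of_ne hPIcc1.2 hne2⟩
    -- partial derivatives
    set μx : ℝ × ℝ → ℝ := fun p => fderiv ℝ f p (1, 0) with hμxdef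
    set μt : ℝ × ℝ → ℝ := fun p => fderiv ℝ f p (0, 1) with hμtdef
    set μxx : ℝ × ℝ → ℝ := fun p => fderiv ℝ μx p (1, 0) with hμxxdef
    set μtt : ℝ × ℝ → ℝ := fun p => fderiv ℝ μt p (0, 1) with hμttdef
    have hμxC1 : ContDiff ℝ 1 μx := contdiff_partial_x f hsm
    have hμtC1 : ContDiff ℝ 1 μt := contdiff_partial_t f hsm
    set ν0 : ℝ := ∫ t in Ioo thmin thmax, μ P.1 t with hν0def
    have hν0nonneg : 0 ≤ ν0 :=
      setIntegral_nonneg measurableSet_Ioo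
        (fun t ht => hpos P.1 hPIcc1 t (Ioo_subset_Icc_self ht))
    have hpde' : ∀ θ ∈ Ioo thmin thmax,
        -(c * μx (P.1, θ)) - (thmin + τ * (θ - thmin)) * μxx (P.1, θ)
          - alpha * μtt (P.1, θ) = r * μ P.1 θ * (1 - ν0) := by
      intro θ hθ
      have h := hpde P.1 hξ θ hθ
      have e1 : deriv (fun x => μ x θ) P.1 = μx (P.1, θ) :=
        (hasDerivAt_slice_x f hfd P.1 θ).deriv
      have e2 : iteratedDeriv 2 (fun x => μ x θ) P.1 = μxx (P.1, θ) := slice_xx f hsm P.1 θ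
      have e3 : iteratedDeriv 2 (fun t => μ P.1 t) θ = μtt (P.1, θ) := slice_tt f hsm P.1 θ
      rw [e1, e2, e3] at h
      exact h
    -- continuity of the slice functions in θ
    have hc1 : Continuous (fun θ : ℝ => ((P.1 : ℝ), θ)) := continuous_const.prodMk continuous_id
    have hcμx : Continuous (fun θ => μx (P.1, θ)) := by
      have := hμxC1.continuous.comp hc1
      simpa [Function.comp_def] using this
    have hcμxx : Continuous (fun θ => μxx (P.1, θ)) := by
      have := (cont_partial_xx f hsm).comp hc1
      simpa [Function.comp_def] using this
    have hcμtt : Continuous (fun θ => μtt (P.1, θ)) := by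
      have := (cont_partial_tt f hsm).comp hc1
      simpa [Function.comp_def] using this
    have hcμ : Continuous (fun θ => μ P.1 θ) := by
      have := hsm.continuous.comp hc1
      simpa [hfdef, Function.uncurry, Function.comp_def] using this
    -- extend the PDE to the closed interval
    have hEIcc : ∀ θ ∈ Icc thmin thmax,
        -(c * μx (P.1, θ)) - (thmin + τ * (θ - thmin)) * μxx (P.1, θ)
          - alpha * μtt (P.1, θ) - r * μ P.1 θ * (1 - ν0) = 0 := by
      set Efun : ℝ → ℝ := fun θ => -(c * μx (P.1, θ)) - (thmin + τ * (θ - thmin)) * μxx (P.1, θ)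
          - alpha * μtt (P.1, θ) - r * μ P.1 θ * (1 - ν0) with hEdef
      have t1 : Continuous fun θ : ℝ => -(c * μx (P.1, θ)) := (continuous_const.mul hcμx).neg
      have t2 : Continuous fun θ : ℝ => (thmin + τ * (θ - thmin)) :=
        continuous_const.add (continuous_const.mul (continuous_id.sub continuous_const))
      have t5 : Continuous fun θ : ℝ => r * μ P.1 θ * (1 - ν0) :=
        (continuous_const.mul hcμ).mul continuous_const
      have hEcont : Continuous Efun :=
        ((t1.sub (t2.mul hcμxx)).sub (continuous_const.mul hcμtt)).sub t5
      have h0 : Set.EqOn Efun (fun _ => (0:ℝ)) (Ioo thmin thmax) := by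
        intro θ hθ
        have := hpde' θ hθ
        show Efun θ = 0
        rw [hEdef]
        dsimp only
        linarith
      have hcl := h0.closure hEcont continuous_const
      intro θ hθ
      have hmem : θ ∈ closure (Ioo thmin thmax) := by
        rw [closure_Ioo hthth.ne]; exact hθ
      have := hcl hmem
      simpa [hEdef] using this
    -- extend the Qhat ODE to the closed interval
    have hQ'C1 : ContDiff ℝ 1 (deriv Qhat) := by
      have := (contDiff_succ_iff_deriv (n := 1)).mp (by exact_mod_cast hQsm)
      exact this.2.2
    have hQ2cont : Continuous (iteratedDeriv 2 Qhat) := by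
      have h2 : iteratedDeriv 2 Qhat = deriv (deriv Qhat) := by
        rw [show (2:ℕ) = 1 + 1 from rfl, iteratedDeriv_succ, iteratedDeriv_one]
      rw [h2]; exact hQ'C1.continuous_deriv le_rfl
    have hQIcc : ∀ θ ∈ Icc thmin thmax,
        alpha * iteratedDeriv 2 Qhat θ
          + (-(lam * chat) + (thmin + τ * (θ - thmin)) * lam ^ 2 + r) * Qhat θ = 0 := by
      set EQ : ℝ → ℝ := fun θ => alpha * iteratedDeriv 2 Qhat θ
          + (-(lam * chat) + (thmin + τ * (θ - thmin)) * lam ^ 2 + r) * Qhat θ with hEQdef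
      have t2 : Continuous fun θ : ℝ =>
          (-(lam * chat) + (thmin + τ * (θ - thmin)) * lam ^ 2 + r) :=
        (continuous_const.add ((continuous_const.add
          (continuous_const.mul (continuous_id.sub continuous_const))).mul
            continuous_const)).add continuous_const
      have hEQcont : Continuous EQ :=
        (continuous_const.mul hQ2cont).add (t2.mul hQsm.continuous)
      have h0 : Set.EqOn EQ (fun _ => (0:ℝ)) (Ioo thmin thmax) := fun θ hθ => hQeq θ hθ
      have hcl := h0.closure hEQcont continuous_const
      intro θ hθ
      have hmem : θ ∈ closure (Ioo thmin thmax) := by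
        rw [closure_Ioo hthth.ne]; exact hθ
      have := hcl hmem
      simpa [hEQdef] using this
    -- the test function in the x-direction at the max point
    have hexpC : ContDiff ℝ 2 (fun x : ℝ => Real.exp (-(lam * x))) :=
      (Real.contDiff_exp.of_le le_top).comp ((contDiff_const.mul contDiff_id).neg)
    have hsliceC2x : ContDiff ℝ 2 (fun x => μ x P.2) := by
      have := hsm.comp ((contDiff_id.prodMk contDiff_const) : ContDiff ℝ 2 fun x : ℝ => (x, P.2))
      simpa [hfdef, Function.uncurry, Function.comp_def] using this
    have hexpD : ∀ x : ℝ, HasDerivAt (fun y : ℝ => Real.exp (-(lam * y)))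
        (-lam * Real.exp (-(lam * x))) x := by
      intro x
      have h := (((hasDerivAt_id x).const_mul lam).neg).exp
      convert h using 1
      show _ = Real.exp (-(lam * x)) * -(lam * 1)
      ring
      rfl
    set h1 : ℝ → ℝ := fun x => M * (Real.exp (-(lam * x)) * Qhat P.2) - μ x P.2 with hh1def
    have hh1C2 : ContDiff ℝ 2 h1 := (contDiff_const.mul (hexpC.mul contDiff_const)).sub hsliceC2x
    have hd1 : ∀ x, HasDerivAt h1
        (M * ((-lam * Real.exp (-(lam * x))) * Qhat P.2) - μx (x, P.2)) x := by
      intro x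
      exact (((hexpD x).mul_const (Qhat P.2)).const_mul M).sub (hasDerivAt_slice_x f hfd x P.2)
    have hderivh1 : deriv h1 = fun x => M * ((-lam * Real.exp (-(lam * x))) * Qhat P.2) - μx (x, P.2) :=
      funext fun x => (hd1 x).deriv
    have hd2 : HasDerivAt (fun x => M * ((-lam * Real.exp (-(lam * x))) * Qhat P.2) - μx (x, P.2))
        (M * ((-lam * (-lam * Real.exp (-(lam * P.1)))) * Qhat P.2) - μxx (P.1, P.2)) P.1 :=
      ((((hexpD P.1).const_mul (-lam)).mul_const (Qhat P.2)).const_mul M).sub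
        (hasDerivAt_slice_x μx (hμxC1.differentiable one_ne_zero) P.1 P.2)
    have hiter1 : iteratedDeriv 2 h1 P.1
        = M * ((-lam * (-lam * Real.exp (-(lam * P.1)))) * Qhat P.2) - μxx (P.1, P.2) := by
      have h2 : iteratedDeriv 2 h1 = deriv (deriv h1) := by
        rw [show (2:ℕ) = 1 + 1 from rfl, iteratedDeriv_succ, iteratedDeriv_one]
      rw [h2, hderivh1]
      exact hd2.deriv
    have hmin1 : ∀ y ∈ Icc (-a) a, (0:ℝ) ≤ h1 y := by
      intro y hy
      have hkey : μ y P.2 ≤ M * ψ (y, P.2) := key (y, P.2) ⟨hy, hPIcc2⟩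
      have hψy : ψ (y, P.2) = Real.exp (-(lam * y)) * Qhat P.2 := rfl
      rw [hψy] at hkey
      show (0:ℝ) ≤ M * (Real.exp (-(lam * y)) * Qhat P.2) - μ y P.2
      linarith
    have hh1P : h1 P.1 = 0 := by
      show M * (Real.exp (-(lam * P.1)) * Qhat P.2) - μ P.1 P.2 = 0
      rw [hμP]
      have hψPv : ψ P = Real.exp (-(lam * P.1)) * Qhat P.2 := rfl
      rw [hψPv]
      ring
    have hlocmin1 : IsLocalMin h1 P.1 := by
      have hmem : Ioo (-a) a ∈ nhds P.1 := isOpen_Ioo.mem_nhds hξ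
      exact Filter.eventually_of_mem hmem fun y hy => by
        rw [hh1P]; exact hmin1 y (Ioo_subset_Icc_self hy)
    have hd1P : deriv h1 P.1 = 0 := hlocmin1.deriv_eq_zero
    have eq1 : M * ((-lam * Real.exp (-(lam * P.1))) * Qhat P.2) - μx (P.1, P.2) = 0 := by
      have h := hd1P
      rw [hderivh1] at h
      simpa using h
    have ineq2 : 0 ≤ M * ((-lam * (-lam * Real.exp (-(lam * P.1)))) * Qhat P.2) - μxx (P.1, P.2) := by
      rw [← hiter1]
      exact deriv2_nonneg_right h1 hh1C2 P.1 a hξ.2 hd1P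
        (fun y hy => by rw [hh1P]; exact hmin1 y ⟨le_trans hξ.1.le hy.1, hy.2.le⟩)
    -- the test function in the t-direction at the max point
    have hsliceC2t : ContDiff ℝ 2 (fun t => μ P.1 t) := by
      have := hsm.comp ((contDiff_const.prodMk contDiff_id) : ContDiff ℝ 2 fun t : ℝ => (P.1, t))
      simpa [hfdef, Function.uncurry, Function.comp_def] using this
    set h2f : ℝ → ℝ := fun t => M * (Real.exp (-(lam * P.1)) * Qhat t) - μ P.1 t with hh2def
    have hh2C2 : ContDiff ℝ 2 h2f := (contDiff_const.mul (contDiff_const.mul hQsm)).sub hsliceC2t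
    have hQd : Differentiable ℝ Qhat := hQsm.differentiable (by norm_num)
    have hd2t : ∀ t, HasDerivAt h2f
        (M * (Real.exp (-(lam * P.1)) * deriv Qhat t) - μt (P.1, t)) t := fun t =>
      ((((hQd t).hasDerivAt).const_mul (Real.exp (-(lam * P.1)))).const_mul M).sub
        (hasDerivAt_slice_t f hfd P.1 t)
    have hderivh2 : deriv h2f = fun t => M * (Real.exp (-(lam * P.1)) * deriv Qhat t) - μt (P.1, t) :=
      funext fun t => (hd2t t).deriv
    have hQ'd : Differentiable ℝ (deriv Qhat) := hQ'C1.differentiable one_ne_zero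
    have hd2tt : HasDerivAt (fun t => M * (Real.exp (-(lam * P.1)) * deriv Qhat t) - μt (P.1, t))
        (M * (Real.exp (-(lam * P.1)) * deriv (deriv Qhat) P.2) - μtt (P.1, P.2)) P.2 :=
      ((((hQ'd P.2).hasDerivAt).const_mul (Real.exp (-(lam * P.1)))).const_mul M).sub
        (hasDerivAt_slice_t μt (hμtC1.differentiable one_ne_zero) P.1 P.2)
    have hQ2eq : deriv (deriv Qhat) P.2 = iteratedDeriv 2 Qhat P.2 := by
      rw [show (2:ℕ) = 1 + 1 from rfl, iteratedDeriv_succ, iteratedDeriv_one]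
    have hiter2 : iteratedDeriv 2 h2f P.2
        = M * (Real.exp (-(lam * P.1)) * deriv (deriv Qhat) P.2) - μtt (P.1, P.2) := by
      have h2 : iteratedDeriv 2 h2f = deriv (deriv h2f) := by
        rw [show (2:ℕ) = 1 + 1 from rfl, iteratedDeriv_succ, iteratedDeriv_one]
      rw [h2, hderivh2]
      exact hd2tt.deriv
    have hmin2 : ∀ t ∈ Icc thmin thmax, (0:ℝ) ≤ h2f t := by
      intro t ht
      have hkey : μ P.1 t ≤ M * ψ (P.1, t) := key (P.1, t) ⟨hPIcc1, ht⟩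
      have hψt : ψ (P.1, t) = Real.exp (-(lam * P.1)) * Qhat t := rfl
      rw [hψt] at hkey
      show (0:ℝ) ≤ M * (Real.exp (-(lam * P.1)) * Qhat t) - μ P.1 t
      linarith
    have hh2P : h2f P.2 = 0 := by
      show M * (Real.exp (-(lam * P.1)) * Qhat P.2) - μ P.1 P.2 = 0
      rw [hμP]
      have hψPv : ψ P = Real.exp (-(lam * P.1)) * Qhat P.2 := rfl
      rw [hψPv]
      ring
    have eμtmin : μt (P.1, thmin) = 0 := by
      have e : deriv (fun t => μ P.1 t) thmin = μt (P.1, thmin) :=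
        (hasDerivAt_slice_t f hfd P.1 thmin).deriv
      rw [← e]
      exact (hneu P.1 hξ).1
    have eμtmax : μt (P.1, thmax) = 0 := by
      have e : deriv (fun t => μ P.1 t) thmax = μt (P.1, thmax) :=
        (hasDerivAt_slice_t f hfd P.1 thmax).deriv
      rw [← e]
      exact (hneu P.1 hξ).2
    have hdt0 : deriv h2f P.2 = 0 := by
      rw [hderivh2]
      dsimp only
      rcases eq_or_lt_of_le hPIcc2.1 with hmi | hgt
      · rw [← hmi, hQbc.1, eμtmin]
        ring
      · rcases eq_or_lt_of_le hPIcc2.2 with hma | hlt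
        · rw [hma, hQbc.2, eμtmax]
          ring
        · have hlocmin2 : IsLocalMin h2f P.2 := by
            have hmem : Ioo thmin thmax ∈ nhds P.2 := isOpen_Ioo.mem_nhds ⟨hgt, hlt⟩
            exact Filter.eventually_of_mem hmem fun t ht => by
              rw [hh2P]; exact hmin2 t (Ioo_subset_Icc_self ht)
          have := hlocmin2.deriv_eq_zero
          rw [hderivh2] at this
          simpa using this
    have hdt0' : deriv h2f P.2 = 0 := hdt0
    have ineq3pre : 0 ≤ iteratedDeriv 2 h2f P.2 := by
      rcases lt_or_eq_of_le hPIcc2.2 with hlt | heq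
      · exact deriv2_nonneg_right h2f hh2C2 P.2 thmax hlt hdt0'
          (fun y hy => by rw [hh2P]; exact hmin2 y ⟨le_trans hPIcc2.1 hy.1, hy.2.le⟩)
      · refine deriv2_nonneg_left h2f hh2C2 P.2 thmin ?_ hdt0' ?_
        · rw [← heq] at hthth; exact hthth
        · intro y hy
          rw [hh2P]
          exact hmin2 y ⟨hy.1.le, le_trans hy.2 hPIcc2.2⟩
    have ineq3 : 0 ≤ M * (Real.exp (-(lam * P.1)) * iteratedDeriv 2 Qhat P.2) - μtt (P.1, P.2) := by
      rw [← hQ2eq, ← hiter2]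
      exact ineq3pre
    -- assemble the contradiction
    have EP := hEIcc P.2 hPIcc2
    have EQP := hQIcc P.2 hPIcc2
    have hμPval : μ P.1 P.2 = M * (Real.exp (-(lam * P.1)) * Qhat P.2) := hμP
    have hg0 : 0 < thmin + τ * (P.2 - thmin) := by
      have h1' := mul_nonneg hτ.1 (sub_nonneg.mpr hPIcc2.1)
      linarith
    have hEξpos : (0:ℝ) < Real.exp (-(lam * P.1)) := Real.exp_pos _
    have hK : (0:ℝ) < M * (Real.exp (-(lam * P.1)) * Qhat P.2) :=
      mul_pos hMpos (mul_pos hEξpos hQP)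
    rw [hμPval] at EP
    set K := M * (Real.exp (-(lam * P.1)) * Qhat P.2) with hKdef
    set g0 := thmin + τ * (P.2 - thmin) with hg0def
    have e5 : -(c * μx (P.1, P.2)) = lam * c * K := by
      rw [hKdef]
      linear_combination c * eq1
    have hring2 : M * ((-lam * (-lam * Real.exp (-(lam * P.1)))) * Qhat P.2)
        = lam ^ 2 * (M * (Real.exp (-(lam * P.1)) * Qhat P.2)) := by ring
    have i2a : μxx (P.1, P.2) ≤ lam ^ 2 * (M * (Real.exp (-(lam * P.1)) * Qhat P.2)) := by
      rw [← hring2]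
      linarith [ineq2]
    have i2 : g0 * μxx (P.1, P.2) ≤ g0 * (lam ^ 2 * K) := by
      rw [hKdef]
      exact mul_le_mul_of_nonneg_left i2a hg0.le
    have i3 : alpha * μtt (P.1, P.2) ≤ (lam * chat - g0 * lam ^ 2 - r) * K := by
      have i3a : μtt (P.1, P.2) ≤ M * (Real.exp (-(lam * P.1)) * iteratedDeriv 2 Qhat P.2) := by
        linarith
      calc alpha * μtt (P.1, P.2)
          ≤ alpha * (M * (Real.exp (-(lam * P.1)) * iteratedDeriv 2 Qhat P.2)) :=
            mul_le_mul_of_nonneg_left i3a halpha.le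
      _ = (lam * chat - g0 * lam ^ 2 - r) * K := by
            rw [hKdef, hg0def]
            linear_combination (M * Real.exp (-(lam * P.1))) * EQP
    have final : r * K * (1 - ν0) ≥ lam * (c - chat) * K + r * K := by
      have hEP' : r * K * (1 - ν0)
          = -(c * μx (P.1, P.2)) - g0 * μxx (P.1, P.2) - alpha * μtt (P.1, P.2) := by
        linarith [EP]
      rw [hEP', e5]
      linarith [i2, i3]
    have hpos1 : 0 < lam * (c - chat) * K := mul_pos (mul_pos hlam (sub_pos.mpr hcc)) hK
    have hpos2 : 0 ≤ r * K * ν0 := mul_nonneg (mul_nonneg hr.le hK.le) hν0nonneg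
    linarith [final, hpos1, hpos2]
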